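/- Let μ be a probability measure on a measurable space 𝒳. Fix an integer m ≥ 1 and let Δ = {ρ ∈ ℝ^m : ρ_s ≥ 0 for all s and Σ_{s=1}^m ρ_s = 1} be the probability simplex. Let C_1, …, C_m : 𝒳 → ℝ be bounded measurable and for ρ ∈ Δ set f_ρ(x) = Σ_{s=1}^m ρ_s C_s(x). Suppose ρ* ∈ Δ minimizes ρ ↦ ∫ max(f_ρ, 0) dμ over Δ and that μ({x : f_{ρ*}(x) = 0}) = 0. Then the rule d*(x) = 1{f_{ρ*}(x) > 0} satisfies: (i) inf_{ρ ∈ Δ} ∫ f_ρ(x) d*(x) dμ(x) = ∫ max(f_{ρ*}(x), 0) dμ(x) = min_{ρ ∈ Δ} ∫ max(f_ρ(x), 0) dμ(x); and (ii) for every measurable d : 𝒳 → {0,1}, inf_{ρ ∈ Δ} ∫ f_ρ(x) d(x) dμ(x) ≤ inf_{ρ ∈ Δ} ∫ f_ρ(x) d*(x) dμ(x). That is, d* maximizes the worst-case policy value over mixtures of the source distributions. -/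

import Mathlib

open MeasureTheory
open Filter Topology

lemma dro_ptwise (a b t Bv : ℝ) (ht : 0 < t) (hb : |b| ≤ Bv) :
    max (a + t * b) 0 ≤ max a 0 + t * (b * (if 0 < a then (1:ℝ) else 0))
      + (if |a| ≤ Bv * t then Bv * t else 0) := by
  have h1 := le_abs_self b
  have h2 := neg_abs_le b
  have h3 := abs_nonneg b
  have h4 := le_max_right a 0
  have h5 := le_max_left a 0
  split_ifs with hA ha <;>
  · apply max_le <;> rcases le_or_gt 0 a with h|h <;>
      simp_all [abs_of_nonneg, abs_of_neg] <;> nlinarith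

lemma dro_integrable {𝓧 : Type*} [MeasurableSpace 𝓧] (μ : Measure 𝓧) [IsFiniteMeasure μ]
    (f : 𝓧 → ℝ) (hf : Measurable f) (K : ℝ) (h : ∀ x, |f x| ≤ K) : Integrable f μ :=
  ⟨hf.aestronglyMeasurable, HasFiniteIntegral.of_bounded (C := K) (ae_of_all _ h)⟩

lemma dro_core {𝓧 : Type*} [MeasurableSpace 𝓧] (μ : Measure 𝓧) [IsProbabilityMeasure μ]
    (a g : 𝓧 → ℝ) (ha : Measurable a) (hg : Measurable g)
    (B : ℝ) (hB : 0 < B) (hab : ∀ x, |a x| ≤ B) (hgb : ∀ x, |g x| ≤ B)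
    (hnodeg : μ {x | a x = 0} = 0)
    (hmin : ∀ t : ℝ, 0 < t → t ≤ 1 →
        (∫ x, max (a x) 0 ∂μ) ≤ ∫ x, max (a x + t * (g x - a x)) 0 ∂μ) :
    (∫ x, max (a x) 0 ∂μ) ≤ ∫ x, g x * (if 0 < a x then (1:ℝ) else 0) ∂μ := by
  classical
  have hdmeas : Measurable (fun x => if 0 < a x then (1:ℝ) else 0) :=
    Measurable.ite (measurableSet_lt measurable_const ha) measurable_const measurable_const
  have hdb : ∀ x, |(if 0 < a x then (1:ℝ) else 0)| ≤ 1 := by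
    intro x; split_ifs <;> simp
  have habs : ∀ x, |a x| ≤ B := hab
  have int_gd : Integrable (fun x => g x * (if 0 < a x then (1:ℝ) else 0)) μ := by
    refine dro_integrable μ _ (hg.mul hdmeas) B fun x => ?_
    rw [abs_mul]
    calc |g x| * |if 0 < a x then (1:ℝ) else 0| ≤ B * 1 :=
      mul_le_mul (hgb x) (hdb x) (abs_nonneg _) hB.le
    _ = B := mul_one B
  have int_ad : Integrable (fun x => a x * (if 0 < a x then (1:ℝ) else 0)) μ := by
    refine dro_integrable μ _ (ha.mul hdmeas) B fun x => ?_
    rw [abs_mul]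
    calc |a x| * |if 0 < a x then (1:ℝ) else 0| ≤ B * 1 :=
      mul_le_mul (hab x) (hdb x) (abs_nonneg _) hB.le
    _ = B := mul_one B
  have int_bd : Integrable (fun x => (g x - a x) * (if 0 < a x then (1:ℝ) else 0)) μ := by
    refine dro_integrable μ _ ((hg.sub ha).mul hdmeas) (2*B) fun x => ?_
    obtain ⟨h1, h2⟩ := abs_le.1 (hab x); obtain ⟨h3, h4⟩ := abs_le.1 (hgb x)
    split_ifs with h
    · rw [mul_one, abs_le]; constructor <;> linarith
    · rw [mul_zero, abs_zero]; positivity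
  have int_maxa : Integrable (fun x => max (a x) 0) μ := by
    refine dro_integrable μ _ (ha.max measurable_const) B fun x => ?_
    obtain ⟨h1, h2⟩ := abs_le.1 (hab x)
    rw [abs_le]
    exact ⟨le_trans (by linarith) (le_max_right _ _), max_le h2 hB.le⟩
  set D : ℝ := (∫ x, g x * (if 0 < a x then (1:ℝ) else 0) ∂μ)
      - ∫ x, a x * (if 0 < a x then (1:ℝ) else 0) ∂μ with hD
  have had : (∫ x, a x * (if 0 < a x then (1:ℝ) else 0) ∂μ) = ∫ x, max (a x) 0 ∂μ := by
    refine integral_congr_ae (ae_of_all _ fun x => ?_)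
    show a x * (if 0 < a x then (1:ℝ) else 0) = max (a x) 0
    split_ifs with h
    · rw [mul_one, max_eq_left h.le]
    · push_neg at h; rw [mul_zero, max_eq_right h]
  -- the main step: for each n, -(2B μ(A n)) ≤ D
  have step : ∀ n : ℕ,
      -(2 * B * (μ {x | |a x| ≤ 2 * B * (1/((n:ℝ)+1))}).toReal) ≤ D := by
    intro n
    set t : ℝ := 1/((n:ℝ)+1) with htdef
    have ht : 0 < t := by positivity
    have ht1 : t ≤ 1 := by
      rw [htdef, div_le_one (by positivity)]
      linarith [Nat.cast_nonneg (α := ℝ) n]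
    have hmin' := hmin t ht ht1
    have hpt : ∀ x, max (a x + t * (g x - a x)) 0
        ≤ max (a x) 0 + t * ((g x - a x) * (if 0 < a x then (1:ℝ) else 0))
          + (if |a x| ≤ 2*B*t then 2*B*t else 0) := by
      intro x
      refine dro_ptwise _ _ _ _ ht ?_
      obtain ⟨h1, h2⟩ := abs_le.1 (hab x); obtain ⟨h3, h4⟩ := abs_le.1 (hgb x)
      rw [abs_le]; constructor <;> linarith
    have hsmeas : MeasurableSet {x | |a x| ≤ 2*B*t} := measurableSet_le ha.abs measurable_const
    have hindeq : (fun x => if |a x| ≤ 2*B*t then 2*B*t else 0)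
        = Set.indicator {x | |a x| ≤ 2*B*t} (fun _ => 2*B*t) := by
      funext x; simp [Set.indicator_apply, Set.mem_setOf_eq]
    have int_ind : Integrable (fun x => if |a x| ≤ 2*B*t then 2*B*t else 0) μ := by
      rw [hindeq]; exact (integrable_const _).indicator hsmeas
    have int_lhs : Integrable (fun x => max (a x + t * (g x - a x)) 0) μ := by
      refine dro_integrable μ _
        ((ha.add (measurable_const.mul (hg.sub ha))).max measurable_const) (3*B) fun x => ?_
      obtain ⟨h1, h2⟩ := abs_le.1 (hab x); obtain ⟨h3, h4⟩ := abs_le.1 (hgb x)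
      rw [abs_le]
      constructor
      · refine le_trans ?_ (le_max_right _ _); nlinarith
      · apply max_le ?_ (by nlinarith)
        nlinarith
    have hmono : (∫ x, max (a x + t * (g x - a x)) 0 ∂μ)
        ≤ ∫ x, (max (a x) 0 + t * ((g x - a x) * (if 0 < a x then (1:ℝ) else 0))
            + (if |a x| ≤ 2*B*t then 2*B*t else 0)) ∂μ :=
      integral_mono int_lhs ((int_maxa.add (int_bd.const_mul t)).add int_ind) hpt
    have hsplit : (∫ x, (max (a x) 0 + t * ((g x - a x) * (if 0 < a x then (1:ℝ) else 0))
            + (if |a x| ≤ 2*B*t then 2*B*t else 0)) ∂μ)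
        = (∫ x, max (a x) 0 ∂μ) + t * (∫ x, (g x - a x) * (if 0 < a x then (1:ℝ) else 0) ∂μ)
          + (μ {x | |a x| ≤ 2*B*t}).toReal * (2*B*t) := by
      have intB : Integrable (fun x => t * ((g x - a x) * (if 0 < a x then (1:ℝ) else 0))) μ :=
        int_bd.const_mul t
      have intA : Integrable (fun x => max (a x) 0
          + t * ((g x - a x) * (if 0 < a x then (1:ℝ) else 0))) μ := int_maxa.add intB
      rw [integral_add intA int_ind, integral_add int_maxa intB, integral_const_mul, hindeq,
        integral_indicator_const _ hsmeas, smul_eq_mul, Measure.real]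
    have hbdint : (∫ x, (g x - a x) * (if 0 < a x then (1:ℝ) else 0) ∂μ) = D := by
      have heq : (fun x => (g x - a x) * (if 0 < a x then (1:ℝ) else 0))
          = fun x => g x * (if 0 < a x then (1:ℝ) else 0)
            - a x * (if 0 < a x then (1:ℝ) else 0) := by
        funext x; ring
      rw [heq, integral_sub int_gd int_ad]
    rw [hbdint] at hsplit
    have h0 : 0 ≤ t * D + (μ {x | |a x| ≤ 2*B*t}).toReal * (2*B*t) := by linarith
    have hr : (0:ℝ) ≤ (μ {x | |a x| ≤ 2*B*t}).toReal := ENNReal.toReal_nonneg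
    nlinarith [h0, ht]
  -- limit
  have hanti : Antitone (fun n : ℕ => {x | |a x| ≤ 2 * B * (1/((n:ℝ)+1))}) := by
    intro n1 n2 h x hx
    simp only [Set.mem_setOf_eq] at *
    refine hx.trans ?_
    have hcast : ((n1:ℝ)+1) ≤ (n2:ℝ)+1 := by exact_mod_cast Nat.succ_le_succ h
    exact mul_le_mul_of_nonneg_left
      (one_div_le_one_div_of_le (by positivity) hcast) (by positivity)
  have hInter : (⋂ n : ℕ, {x | |a x| ≤ 2 * B * (1/((n:ℝ)+1))}) = {x | a x = 0} := by
    ext x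
    simp only [Set.mem_iInter, Set.mem_setOf_eq]
    constructor
    · intro h
      by_contra hne
      have hpos : 0 < |a x| := abs_pos.2 hne
      obtain ⟨n, hn⟩ := exists_nat_gt (2*B/|a x|)
      have h2 : 2*B < (n:ℝ) * |a x| := by rwa [div_lt_iff₀ hpos] at hn
      have h3 := h n
      have hn1 : (0:ℝ) < (n:ℝ)+1 := by positivity
      rw [mul_one_div, le_div_iff₀ hn1] at h3
      nlinarith
    · intro h n
      rw [h, abs_zero]
      positivity
  have htm : Tendsto (fun n : ℕ => μ {x | |a x| ≤ 2 * B * (1/((n:ℝ)+1))}) atTop (𝓝 0) := by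
    have := tendsto_measure_iInter_atTop
      (s := fun n : ℕ => {x | |a x| ≤ 2 * B * (1/((n:ℝ)+1))})
      (fun n => (measurableSet_le ha.abs measurable_const).nullMeasurableSet)
      hanti ⟨0, measure_ne_top μ _⟩
    rw [hInter, hnodeg] at this
    exact this
  have h2 : Tendsto (fun n : ℕ => (μ {x | |a x| ≤ 2 * B * (1/((n:ℝ)+1))}).toReal) atTop (𝓝 0) := by
    have := (ENNReal.tendsto_toReal (by simp)).comp htm
    exact this
  have h3 : Tendsto (fun n : ℕ =>
      -(2 * B * (μ {x | |a x| ≤ 2 * B * (1/((n:ℝ)+1))}).toReal)) atTop (𝓝 0) := by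
    have := (h2.const_mul (2*B)).neg
    simpa using this
  have hD0 : (0:ℝ) ≤ D := le_of_tendsto h3 (Eventually.of_forall step)
  have := had
  rw [hD] at hD0
  linarith

/-- Theorem 1 of the paper: with `f_ρ = Σ_s ρ_s C_s`, if `ρ*` minimizes
`ρ ↦ ∫ max(f_ρ, 0) dμ` over the simplex and `μ(f_{ρ*} = 0) = 0`, then the rule
`d* = 1{f_{ρ*} > 0}` attains worst-case policy value `∫ max(f_{ρ*}, 0) dμ
= min_{ρ∈Δ} ∫ max(f_ρ, 0) dμ` and maximizes the worst-case policy value over all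
`{0,1}`-valued measurable rules. -/
theorem dro_itr_closed_form
    {𝓧 : Type*} [MeasurableSpace 𝓧] (μ : Measure 𝓧) [IsProbabilityMeasure μ]
    (m : ℕ) (hm : 1 ≤ m)
    (C : Fin m → 𝓧 → ℝ) (hCmeas : ∀ s, Measurable (C s))
    (B : ℝ) (hCbd : ∀ s x, |C s x| ≤ B)
    (ρstar : Fin m → ℝ) (hρstar : ρstar ∈ stdSimplex ℝ (Fin m))
    (hmin : ∀ ρ ∈ stdSimplex ℝ (Fin m),
        (∫ x, max (∑ s, ρstar s * C s x) 0 ∂μ) ≤ ∫ x, max (∑ s, ρ s * C s x) 0 ∂μ)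
    (hnodeg : μ {x | (∑ s, ρstar s * C s x) = 0} = 0) :
    (sInf {v : ℝ | ∃ ρ ∈ stdSimplex ℝ (Fin m),
          v = ∫ x, (∑ s, ρ s * C s x) * (if 0 < (∑ s, ρstar s * C s x) then (1:ℝ) else 0) ∂μ}
        = ∫ x, max (∑ s, ρstar s * C s x) 0 ∂μ)
    ∧ IsLeast {w : ℝ | ∃ ρ ∈ stdSimplex ℝ (Fin m),
          w = ∫ x, max (∑ s, ρ s * C s x) 0 ∂μ}
        (∫ x, max (∑ s, ρstar s * C s x) 0 ∂μ)
    ∧ ∀ d : 𝓧 → ℝ, Measurable d → (∀ x, d x = 0 ∨ d x = 1) →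
        sInf {v : ℝ | ∃ ρ ∈ stdSimplex ℝ (Fin m),
            v = ∫ x, (∑ s, ρ s * C s x) * d x ∂μ}
          ≤ sInf {v : ℝ | ∃ ρ ∈ stdSimplex ℝ (Fin m),
              v = ∫ x, (∑ s, ρ s * C s x)
                  * (if 0 < (∑ s, ρstar s * C s x) then (1:ℝ) else 0) ∂μ} := by
  classical
  have hB0 : 0 < B := by
    rcases lt_or_ge 0 B with h | h
    · exact h
    exfalso
    have hC0 : ∀ x, (∑ s, ρstar s * C s x) = 0 := by
      intro x
      have h0 : ∀ s, C s x = 0 := fun s => abs_nonpos_iff.1 ((hCbd s x).trans h)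
      simp [h0]
    have huniv : {x | (∑ s, ρstar s * C s x) = 0} = Set.univ :=
      Set.eq_univ_of_forall fun x => hC0 x
    rw [huniv] at hnodeg
    simp at hnodeg
  have hfmeas : ∀ ρ : Fin m → ℝ, Measurable fun x => ∑ s, ρ s * C s x :=
    fun ρ => Finset.measurable_sum _ fun s _ => (hCmeas s).const_mul (ρ s)
  have hfbd : ∀ ρ ∈ stdSimplex ℝ (Fin m), ∀ x, |∑ s, ρ s * C s x| ≤ B := by
    intro ρ hρ x
    calc |∑ s, ρ s * C s x| ≤ ∑ s, |ρ s * C s x| := Finset.abs_sum_le_sum_abs _ _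
    _ = ∑ s, ρ s * |C s x| := by
        refine Finset.sum_congr rfl fun s _ => ?_
        rw [abs_mul, abs_of_nonneg (hρ.1 s)]
    _ ≤ ∑ s, ρ s * B := Finset.sum_le_sum fun s _ =>
        mul_le_mul_of_nonneg_left (hCbd s x) (hρ.1 s)
    _ = B := by rw [← Finset.sum_mul, hρ.2, one_mul]
  have key : ∀ ρ ∈ stdSimplex ℝ (Fin m),
      (∫ x, max (∑ s, ρstar s * C s x) 0 ∂μ) ≤
        ∫ x, (∑ s, ρ s * C s x) * (if 0 < (∑ s, ρstar s * C s x) then (1:ℝ) else 0) ∂μ := by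
    intro ρ hρ
    refine dro_core μ (fun x => ∑ s, ρstar s * C s x) (fun x => ∑ s, ρ s * C s x)
      (hfmeas ρstar) (hfmeas ρ) B hB0 (hfbd _ hρstar) (hfbd _ hρ) hnodeg ?_
    intro t ht ht1
    have heq : (fun s => (1-t) * ρstar s + t * ρ s) = (1-t) • ρstar + t • ρ := by
      funext s; simp [Pi.add_apply, Pi.smul_apply, smul_eq_mul]
    have hρt : (fun s => (1-t) * ρstar s + t * ρ s) ∈ stdSimplex ℝ (Fin m) := by
      rw [heq]
      exact (convex_stdSimplex ℝ (Fin m)) hρstar hρ (by linarith) ht.le (by ring)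
    have hft : ∀ x, (∑ s, ((1-t) * ρstar s + t * ρ s) * C s x)
        = (∑ s, ρstar s * C s x) + t * ((∑ s, ρ s * C s x) - ∑ s, ρstar s * C s x) := by
      intro x
      simp only [add_mul, Finset.sum_add_distrib, mul_assoc, ← Finset.mul_sum]
      ring
    have h := hmin _ hρt
    simpa only [hft] using h
  have hVmem : (∫ x, max (∑ s, ρstar s * C s x) 0 ∂μ)
      = ∫ x, (∑ s, ρstar s * C s x) * (if 0 < (∑ s, ρstar s * C s x) then (1:ℝ) else 0) ∂μ := by
    refine (integral_congr_ae (ae_of_all _ fun x => ?_)).symm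
    show (∑ s, ρstar s * C s x) * (if 0 < (∑ s, ρstar s * C s x) then (1:ℝ) else 0)
      = max (∑ s, ρstar s * C s x) 0
    split_ifs with h
    · rw [mul_one, max_eq_left h.le]
    · push_neg at h; rw [mul_zero, max_eq_right h]
  have hLeast : IsLeast {v : ℝ | ∃ ρ ∈ stdSimplex ℝ (Fin m),
        v = ∫ x, (∑ s, ρ s * C s x) * (if 0 < (∑ s, ρstar s * C s x) then (1:ℝ) else 0) ∂μ}
      (∫ x, max (∑ s, ρstar s * C s x) 0 ∂μ) := by
    constructor
    · exact ⟨ρstar, hρstar, hVmem⟩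
    · rintro v ⟨ρ, hρ, rfl⟩
      exact key ρ hρ
  refine ⟨hLeast.csInf_eq, ⟨⟨ρstar, hρstar, rfl⟩, ?_⟩, ?_⟩
  · rintro w ⟨ρ, hρ, rfl⟩
    exact hmin ρ hρ
  · intro d hd hd01
    rw [hLeast.csInf_eq]
    have hdb : ∀ x, |d x| ≤ 1 := by
      intro x; rcases hd01 x with h | h <;> simp [h]
    have int_fd : ∀ ρ ∈ stdSimplex ℝ (Fin m),
        Integrable (fun x => (∑ s, ρ s * C s x) * d x) μ := by
      intro ρ hρ
      refine dro_integrable μ _ ((hfmeas ρ).mul hd) B fun x => ?_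
      rw [abs_mul]
      calc |∑ s, ρ s * C s x| * |d x| ≤ B * 1 :=
        mul_le_mul (hfbd ρ hρ x) (hdb x) (abs_nonneg _) hB0.le
      _ = B := mul_one B
    have hbdd : BddBelow {v : ℝ | ∃ ρ ∈ stdSimplex ℝ (Fin m),
        v = ∫ x, (∑ s, ρ s * C s x) * d x ∂μ} := by
      refine ⟨-B, ?_⟩
      rintro v ⟨ρ, hρ, rfl⟩
      have hpt : ∀ x, (-B : ℝ) ≤ (∑ s, ρ s * C s x) * d x := by
        intro x
        rcases hd01 x with h | h
        · rw [h, mul_zero]; linarith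
        · rw [h, mul_one]; linarith [(abs_le.1 (hfbd ρ hρ x)).1]
      calc (-B : ℝ) = ∫ _x, (-B : ℝ) ∂μ := by simp
      _ ≤ ∫ x, (∑ s, ρ s * C s x) * d x ∂μ :=
        integral_mono (integrable_const _) (int_fd ρ hρ) hpt
    have hmem : (∫ x, (∑ s, ρstar s * C s x) * d x ∂μ) ∈ {v : ℝ | ∃ ρ ∈ stdSimplex ℝ (Fin m),
        v = ∫ x, (∑ s, ρ s * C s x) * d x ∂μ} := ⟨ρstar, hρstar, rfl⟩
    have int_max : Integrable (fun x => max (∑ s, ρstar s * C s x) 0) μ := by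
      refine dro_integrable μ _ ((hfmeas ρstar).max measurable_const) B fun x => ?_
      obtain ⟨h1, h2⟩ := abs_le.1 (hfbd ρstar hρstar x)
      rw [abs_le]
      exact ⟨le_trans (by linarith) (le_max_right _ _), max_le h2 hB0.le⟩
    calc sInf {v : ℝ | ∃ ρ ∈ stdSimplex ℝ (Fin m),
          v = ∫ x, (∑ s, ρ s * C s x) * d x ∂μ}
        ≤ ∫ x, (∑ s, ρstar s * C s x) * d x ∂μ := csInf_le hbdd hmem
    _ ≤ ∫ x, max (∑ s, ρstar s * C s x) 0 ∂μ := by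
        refine integral_mono (int_fd ρstar hρstar) int_max fun x => ?_
        rcases hd01 x with h | h
        · rw [h, mul_zero]; exact le_max_right _ _
        · rw [h, mul_one]; exact le_max_left _ _
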